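/- arXiv:2509.20746 — 3 statements merged into one kernel-verified Lean document; each statement's English description precedes it below -/
import Mathlib

section
/- Let 0 < ρ < 1 and κ > 1. Suppose f : ℂ → ℂ is analytic on the region {z ∈ ℂ : |z| > ρ}, satisfies Re f(z) > 0 for all |z| > ρ, f(z) → 1 as |z| → ∞, and f(1) = κ. Then ρ ≥ (κ − 1)/(κ + 1). -/
open Metric Set Filter Complex
open scoped Topology

/-- For `Re a > 0`, the Cayley transform has modulus `< 1`. -/
lemma cayley_abs_lt_one {a : ℂ} (ha : 0 < a.re) : ‖(a - 1) / (a + 1)‖ < 1 := by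
  have hne : a + 1 ≠ 0 := by
    intro h
    have : (a + 1).re = 0 := by rw [h]; simp
    simp [Complex.add_re] at this
    linarith
  rw [norm_div, div_lt_one (norm_pos_iff.mpr hne)]
  have h1 : ‖a - 1‖ ^ 2 < ‖a + 1‖ ^ 2 := by
    rw [Complex.sq_norm, Complex.sq_norm, Complex.normSq_apply, Complex.normSq_apply]
    simp only [Complex.add_re, Complex.add_im, Complex.sub_re, Complex.sub_im,
      Complex.one_re, Complex.one_im]
    ring_nf
    nlinarith
  nlinarith [norm_nonneg (a - 1), norm_nonneg (a + 1)]

/-- Necessity direction of Lemma 2: strict positive realness on `{|z| > ρ}`, limit `1`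
at infinity, and the interpolation condition `f(1) = κ` force `ρ ≥ (κ-1)/(κ+1)`. -/
theorem stmt_3 (ρ κ : ℝ) (hρ0 : 0 < ρ) (hρ1 : ρ < 1) (hκ : 1 < κ)
    (f : ℂ → ℂ)
    (hana : AnalyticOnNhd ℂ f {z : ℂ | ρ < ‖z‖})
    (hre : ∀ z : ℂ, ρ < ‖z‖ → 0 < (f z).re)
    (hlim : Filter.Tendsto f (Filter.comap (fun z : ℂ => ‖z‖) Filter.atTop) (nhds 1))
    (hint : f 1 = (κ : ℂ)) :
    (κ - 1) / (κ + 1) ≤ ρ := by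
  set R : ℝ := ρ⁻¹ with hR
  have hR0 : 0 < R := by positivity
  -- the inverted function
  set h : ℂ → ℂ := Function.update (fun w => f w⁻¹) 0 1 with hh
  have hmem : ∀ w : ℂ, w ≠ 0 → w ∈ ball (0 : ℂ) R → ρ < ‖w⁻¹‖ := by
    intro w hw hwB
    rw [mem_ball_zero_iff] at hwB
    rw [norm_inv, lt_inv_comm₀ hρ0 (norm_pos_iff.mpr hw)]
    simpa [hR] using hwB
  have hval : ∀ w : ℂ, w ≠ 0 → h w = f w⁻¹ := fun w hw => Function.update_of_ne hw _ _
  -- differentiability off 0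
  have hdiff' : DifferentiableOn ℂ h (ball (0 : ℂ) R \ {0}) := by
    intro w hw
    have hw0 : w ≠ 0 := hw.2
    have : AnalyticAt ℂ (fun w => f w⁻¹) w := by
      have h1 : AnalyticAt ℂ f w⁻¹ := hana _ (hmem w hw0 hw.1)
      exact h1.comp ((analyticAt_id.inv hw0))
    have : DifferentiableAt ℂ (fun w => f w⁻¹) w := this.differentiableAt
    apply DifferentiableAt.differentiableWithinAt
    apply this.congr_of_eventuallyEq
    filter_upwards [isOpen_compl_singleton.mem_nhds hw0] with x hx
    exact hval x hx
  -- continuity at 0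
  have hcont : ContinuousAt h 0 := by
    rw [← continuousWithinAt_compl_self]
    have h0 : h 0 = 1 := Function.update_self _ _ _
    show Tendsto h (𝓝[≠] (0:ℂ)) (𝓝 (h 0))
    rw [h0]
    apply Filter.Tendsto.congr' (f₁ := fun w => f w⁻¹)
    · filter_upwards [self_mem_nhdsWithin] with x hx
      exact (hval x hx).symm
    · apply hlim.comp
      rw [tendsto_comap_iff]
      have h1 : Tendsto (fun w : ℂ => w⁻¹) (𝓝[≠] (0:ℂ)) (Bornology.cobounded ℂ) :=
        tendsto_inv₀_nhdsNE_zero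
      have h2 := tendsto_norm_cobounded_atTop.comp h1
      simpa [Function.comp] using h2
  have hdiff : DifferentiableOn ℂ h (ball (0 : ℂ) R) :=
    (Complex.differentiableOn_compl_singleton_and_continuousAt_iff
      (ball_mem_nhds _ hR0)).mp ⟨hdiff', hcont⟩
  -- real part positive on the ball
  have hrepos : ∀ w ∈ ball (0 : ℂ) R, 0 < (h w).re := by
    intro w hw
    rcases eq_or_ne w 0 with rfl | hw0
    · simp [hh]
    · rw [hval w hw0]
      exact hre _ (hmem w hw0 hw)
  have hne1 : ∀ w ∈ ball (0 : ℂ) R, h w + 1 ≠ 0 := by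
    intro w hw hc
    have : (h w + 1).re = 0 := by rw [hc]; simp
    simp [Complex.add_re] at this
    have := hrepos w hw
    linarith
  -- Cayley transform
  set φ : ℂ → ℂ := fun w => (h w - 1) / (h w + 1) with hφ
  have hφdiff : DifferentiableOn ℂ φ (ball (0 : ℂ) R) := by
    apply DifferentiableOn.div
    · exact hdiff.sub (differentiableOn_const _)
    · exact hdiff.add (differentiableOn_const _)
    · exact hne1
  have hφ0 : φ 0 = 0 := by
    simp [hφ, hh]
  have hmaps : MapsTo φ (ball (0 : ℂ) R) (ball (φ 0) 1) := by
    intro w hw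
    rw [hφ0, mem_ball_zero_iff]
    exact cayley_abs_lt_one (hrepos w hw)
  have h1mem : (1 : ℂ) ∈ ball (0 : ℂ) R := by
    rw [mem_ball_zero_iff, norm_one, hR, lt_inv_comm₀ one_pos hρ0, inv_one]
    exact hρ1
  have key := Complex.dist_le_div_mul_dist_of_mapsTo_ball hφdiff (hmaps.mono_right ball_subset_closedBall) h1mem
  rw [hφ0] at key
  simp only [dist_zero_right, norm_one, mul_one] at key
  have hφ1 : φ 1 = ((κ - 1) / (κ + 1) : ℝ) := by
    have h1 : h 1 = (κ : ℂ) := by rw [hval 1 one_ne_zero]; simpa using hint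
    simp only [hφ, h1]
    push_cast
    ring
  rw [hφ1] at key
  rw [Complex.norm_real, Real.norm_eq_abs, abs_of_pos (div_pos (by linarith) (by linarith))] at key
  calc (κ - 1) / (κ + 1) ≤ 1 / R := key
    _ = ρ := by rw [hR]; simp
end

section
/- Let κ > 1 and set ρ = (κ − 1)/(κ + 1). Suppose f : ℂ → ℂ is analytic on {z ∈ ℂ : |z| > ρ}, satisfies Re f(z) > 0 for all |z| > ρ, f(z) → 1 as |z| → ∞, and f(1) = κ. Then f(z) = (z + ρ)/(z − ρ) for all |z| > ρ; i.e., the interpolant at the critical value ρ = (κ−1)/(κ+1) is unique. -/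
open Metric Set Filter Complex Topology

/-- Uniqueness in Lemma 2: at the critical value `ρ = (κ-1)/(κ+1)`, any function analytic
on `{|z| > ρ}` with positive real part there, limit `1` at infinity, and `f(1) = κ` must
equal `(z+ρ)/(z-ρ)` on `{|z| > ρ}`. -/
theorem stmt_5 (κ ρ : ℝ) (hκ : 1 < κ) (hρ : ρ = (κ - 1) / (κ + 1))
    (f : ℂ → ℂ)
    (hana : AnalyticOnNhd ℂ f {z : ℂ | ρ < ‖z‖})
    (hre : ∀ z : ℂ, ρ < ‖z‖ → 0 < (f z).re)
    (hlim : Filter.Tendsto f (Filter.comap (fun z : ℂ => ‖z‖) Filter.atTop) (nhds 1))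
    (hint : f 1 = (κ : ℂ)) :
    ∀ z : ℂ, ρ < ‖z‖ → f z = (z + (ρ : ℂ)) / (z - (ρ : ℂ)) := by
  have hρ0 : 0 < ρ := by rw [hρ]; exact div_pos (by linarith) (by linarith)
  have hρ1 : ρ < 1 := by rw [hρ, div_lt_one (by linarith)]; linarith
  set h : ℂ → ℂ := fun z => (f z - 1) / (f z + 1) with hh
  -- denominator nonzero
  have hden : ∀ z : ℂ, ρ < ‖z‖ → f z + 1 ≠ 0 := by
    intro z hz hc
    have h1 : (f z + 1).re = (f z).re + 1 := by simp
    rw [hc] at h1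
    simp only [Complex.zero_re] at h1
    linarith [hre z hz]
  -- |h z| < 1
  have habs : ∀ z : ℂ, ρ < ‖z‖ → ‖h z‖ < 1 := by
    intro z hz
    have h1 : ‖f z - 1‖ < ‖f z + 1‖ := by
      have e1 : ‖f z - 1‖ ^ 2 < ‖f z + 1‖ ^ 2 := by
        rw [Complex.sq_norm, Complex.sq_norm, Complex.normSq_apply, Complex.normSq_apply]
        simp only [Complex.sub_re, Complex.sub_im, Complex.add_re, Complex.add_im,
          Complex.one_re, Complex.one_im]
        nlinarith [hre z hz]
      have := norm_nonneg (f z + 1)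
      nlinarith [norm_nonneg (f z - 1)]
    rw [hh]
    simp only [norm_div]
    rw [div_lt_one (norm_pos_iff.mpr (hden z hz))]
    exact h1
  -- h differentiable on the region
  have hdiff : ∀ z : ℂ, ρ < ‖z‖ → DifferentiableAt ℂ h z := by
    intro z hz
    have hf := (hana z hz).differentiableAt
    exact (hf.sub (differentiableAt_const 1)).div (hf.add (differentiableAt_const 1)) (hden z hz)
  set φ₀ : ℂ → ℂ := fun w => h ((ρ : ℂ) / w) with hφ₀
  have hρc : ‖((ρ : ℂ))‖ = ρ := by
    rw [Complex.norm_real, Real.norm_of_nonneg hρ0.le]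
  -- h tends to 0 at infinity
  have hh0 : Tendsto h (comap (fun z : ℂ => ‖z‖) atTop) (𝓝 0) := by
    have ht : Tendsto (fun z => (f z - 1) / (f z + 1)) (comap (fun z : ℂ => ‖z‖) atTop)
        (𝓝 ((1 - 1) / (1 + 1))) :=
      (hlim.sub tendsto_const_nhds).div (hlim.add tendsto_const_nhds) (by norm_num)
    simpa using ht
  -- ρ / w → ∞ as w → 0 (punctured)
  have hwinf : Tendsto (fun w : ℂ => (ρ : ℂ) / w) (𝓝[≠] (0 : ℂ)) (comap (fun z : ℂ => ‖z‖) atTop) := by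
    rw [tendsto_comap_iff]
    have heq : ((fun z : ℂ => ‖z‖) ∘ fun w : ℂ => (ρ : ℂ) / w) = fun w => ρ * ‖w‖⁻¹ := by
      funext w; simp [norm_div, hρc, div_eq_mul_inv, hρ0.le]
    rw [heq]
    have h1 : Tendsto (fun w : ℂ => ‖w‖) (𝓝[≠] (0 : ℂ)) (𝓝[>] 0) := by
      rw [tendsto_nhdsWithin_iff]
      constructor
      · have := (continuous_norm.tendsto (0:ℂ)).mono_left (nhdsWithin_le_nhds (s := {(0:ℂ)}ᶜ))
        simpa using this
      · filter_upwards [self_mem_nhdsWithin] with w hw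
        exact norm_pos_iff.mpr hw
    exact (tendsto_inv_nhdsGT_zero.comp h1).const_mul_atTop hρ0
  have hφ₀0 : Tendsto φ₀ (𝓝[≠] (0 : ℂ)) (𝓝 0) := hh0.comp hwinf
  set φ : ℂ → ℂ := Function.update φ₀ 0 (limUnder (𝓝[≠] (0 : ℂ)) φ₀) with hφ
  have hφzero : φ 0 = 0 := by
    rw [hφ, Function.update_self, hφ₀0.limUnder_eq]
  have hmem : ∀ w : ℂ, w ∈ ball (0 : ℂ) 1 → w ≠ 0 → ρ < ‖(ρ : ℂ) / w‖ := by
    intro w hw hw0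
    rw [mem_ball_zero_iff] at hw
    rw [norm_div, hρc, lt_div_iff₀ (norm_pos_iff.mpr hw0)]
    nlinarith [norm_pos_iff.mpr hw0]
  have hφdiff : DifferentiableOn ℂ φ (ball (0 : ℂ) 1) := by
    apply Complex.differentiableOn_update_limUnder_of_bddAbove (ball_mem_nhds _ one_pos)
    · intro w hw
      have hw0 : w ≠ 0 := by simpa using hw.2
      have hd1 : DifferentiableAt ℂ (fun w : ℂ => (ρ : ℂ) / w) w :=
        (differentiableAt_const _).div differentiableAt_id hw0
      exact ((hdiff _ (hmem w hw.1 hw0)).comp w hd1).differentiableWithinAt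
    · refine ⟨1, ?_⟩
      rintro x ⟨w, hw, rfl⟩
      have hw0 : w ≠ 0 := by simpa using hw.2
      exact le_of_lt (habs _ (hmem w hw.1 hw0))
  have hmaps : MapsTo φ (ball (0 : ℂ) 1) (ball (φ 0) 1) := by
    intro w hw
    rw [hφzero, mem_ball_zero_iff]
    rcases eq_or_ne w 0 with rfl | hw0
    · rw [hφzero]; norm_num
    · rw [hφ, Function.update_of_ne hw0]
      exact habs _ (hmem w hw hw0)
  have hρne : (ρ : ℂ) ≠ 0 := by
    simpa using hρ0.ne'
  have hρball : (ρ : ℂ) ∈ ball (0 : ℂ) 1 := by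
    rw [mem_ball_zero_iff, hρc]; exact hρ1
  have hφρ : φ (ρ : ℂ) = (ρ : ℂ) := by
    rw [hφ, Function.update_of_ne hρne]
    show h ((ρ : ℂ) / (ρ : ℂ)) = _
    rw [div_self hρne]
    show (f 1 - 1) / (f 1 + 1) = _
    rw [hint, hρ]
    push_cast
    rfl
  have hds : dslope φ 0 (ρ : ℂ) = 1 := by
    rw [dslope_of_ne _ hρne]
    simp only [slope, hφρ, hφzero, sub_zero, vsub_eq_sub, smul_eq_mul]
    field_simp
  have haff := affine_of_mapsTo_ball_of_exists_norm_dslope_eq_div hφdiff (hmaps.mono_right ball_subset_closedBall) hρball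
    (by rw [hds]; norm_num)
  have hid : ∀ w ∈ ball (0 : ℂ) 1, φ w = w := by
    intro w hw
    have := haff hw
    simpa [hφzero, hds] using this
  intro z hz
  have hz0 : z ≠ 0 := by
    intro hc; rw [hc] at hz; simp at hz; linarith
  have hwb : (ρ : ℂ) / z ∈ ball (0 : ℂ) 1 := by
    rw [mem_ball_zero_iff, norm_div, hρc,
      div_lt_one (hρ0.trans hz)]
    exact hz
  have hw0 : (ρ : ℂ) / z ≠ 0 := div_ne_zero hρne hz0
  have hkey : h z = (ρ : ℂ) / z := by
    have h1 := hid _ hwb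
    rw [hφ, Function.update_of_ne hw0] at h1
    have hzw : (ρ : ℂ) / ((ρ : ℂ) / z) = z := by field_simp
    calc h z = φ₀ ((ρ : ℂ) / z) := by
          show h z = h ((ρ : ℂ) / ((ρ : ℂ) / z))
          rw [hzw]
    _ = (ρ : ℂ) / z := h1
  have hzρ : z - (ρ : ℂ) ≠ 0 := by
    intro hc
    have hzρ' : z = (ρ : ℂ) := sub_eq_zero.mp hc
    rw [hzρ', hρc] at hz
    exact lt_irrefl _ hz
  have hfz1 : f z + 1 ≠ 0 := hden z hz
  rw [hh] at hkey
  rw [eq_div_iff hzρ]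
  have h2 : (f z - 1) * z = (ρ : ℂ) * (f z + 1) := by
    field_simp at hkey
    linear_combination hkey
  linear_combination h2
end

section
/- For all real κ_f ≥ 1 and κ_E > 1, the synthesized rate is strictly smaller than the GDA rate: 1 − 2/(κ_f + 1) < sqrt( 1 − (1/κ_f)(1/κ_E − 1/κ_E²) ). (Equivalently, 4 κ_f² κ_E² > (κ_E − 1)(κ_f + 1)².) -/
/-- The synthesized rate `ρ_syn = 1 - 2/(κ_f + 1)` is strictly smaller than the GDA rate
`ρ_gda = sqrt(1 - (1/κ_f)(1/κ_E - 1/κ_E²))` for all `κ_f ≥ 1` and `κ_E > 1`. -/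
theorem stmt_11 (κf κE : ℝ) (hκf : 1 ≤ κf) (hκE : 1 < κE) :
    1 - 2 / (κf + 1) <
      Real.sqrt (1 - (1 / κf) * (1 / κE - 1 / κE ^ 2)) := by
  have hf : (0:ℝ) < κf := by linarith
  have hf1 : (0:ℝ) < κf + 1 := by linarith
  have hE : (0:ℝ) < κE := by linarith
  have hx : (0:ℝ) ≤ 1 - 2 / (κf + 1) := by
    rw [sub_nonneg, div_le_one hf1]; linarith
  have hy : (1 - 2 / (κf + 1)) ^ 2 < 1 - (1 / κf) * (1 / κE - 1 / κE ^ 2) := by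
    have h1 : 1 - 2 / (κf + 1) = (κf - 1) / (κf + 1) := by
      field_simp; ring
    rw [h1, div_pow, div_lt_iff₀ (by positivity)]
    have key : (κE - 1) * (κf + 1) ^ 2 < 4 * κf ^ 2 * κE ^ 2 := by
      nlinarith [sq_nonneg (κf - 1), sq_nonneg κE, sq_nonneg (κE - 1), mul_pos hf hE]
    have hexp : (1 - 1 / κf * (1 / κE - 1 / κE ^ 2)) * (κf + 1) ^ 2
        = (κf + 1) ^ 2 - (κE - 1) * (κf + 1) ^ 2 / (κf * κE ^ 2) := by
      field_simp
    rw [hexp]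
    have h2 : (κE - 1) * (κf + 1) ^ 2 / (κf * κE ^ 2) < 4 * κf := by
      rw [div_lt_iff₀ (by positivity)]
      nlinarith
    nlinarith [h2]
  calc 1 - 2 / (κf + 1) = Real.sqrt ((1 - 2 / (κf + 1)) ^ 2) := by
        rw [Real.sqrt_sq hx]
    _ < _ := by
        apply Real.sqrt_lt_sqrt (by positivity) hy
end
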